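/- The 2-layered grid drawing of K_{m,n} obtained by scaling the construction so that a₁ = 1 and snapping each vertex to the nearest grid point to its left (and the top line to the grid line above) has width and height O(max{m,n}), hence area O(max{m², n²}), while its total resolution remains Θ(1/max{m,n}). -/

import Mathlib

open Real EuclideanGeometry

noncomputable section GridDrawingAux
set_option maxHeartbeats 1000000

private lemma arccos_anti' {x y : ℝ} (h : x ≤ y) : Real.arccos y ≤ Real.arccos x := by
  rw [Real.arccos_eq_pi_div_two_sub_arcsin, Real.arccos_eq_pi_div_two_sub_arcsin]
  have := Real.monotone_arcsin h
  linarith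

private lemma key_lower (a b h : ℝ) (hh : 1 ≤ h) (ha : |a| ≤ h) (hb : |b| ≤ h)
    (hab : 1 ≤ |a - b|) :
    1 / (2 * h) ≤ Real.arccos ((a * b + h * h) /
      (Real.sqrt (a * a + h * h) * Real.sqrt (b * b + h * h))) := by
  have ha' := abs_le.mp ha
  have hb' := abs_le.mp hb
  have hab' : 1 ≤ (a - b) ^ 2 := by
    have h1 := sq_abs (a - b); nlinarith
  obtain ⟨Du, hDu⟩ : ∃ t : ℝ, Real.sqrt (a * a + h * h) = t := ⟨_, rfl⟩
  obtain ⟨Dv, hDv⟩ : ∃ t : ℝ, Real.sqrt (b * b + h * h) = t := ⟨_, rfl⟩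
  rw [hDu, hDv]
  have hDu2 : Du ^ 2 = a * a + h * h := by
    rw [← hDu]; exact Real.sq_sqrt (by nlinarith [sq_nonneg a])
  have hDv2 : Dv ^ 2 = b * b + h * h := by
    rw [← hDv]; exact Real.sq_sqrt (by nlinarith [sq_nonneg b])
  have hDu0 : 0 < Du := by rw [← hDu]; exact Real.sqrt_pos.mpr (by nlinarith [sq_nonneg a])
  have hDv0 : 0 < Dv := by rw [← hDv]; exact Real.sqrt_pos.mpr (by nlinarith [sq_nonneg b])
  clear hDu hDv
  have hI0 : 0 ≤ a * b + h * h := by nlinarith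
  have haa : a * a ≤ h * h := by nlinarith
  have hbb : b * b ≤ h * h := by nlinarith
  have hsqle : (Du * Dv) ^ 2 ≤ (2 * h ^ 2) ^ 2 := by
    rw [mul_pow, hDu2, hDv2]
    have h13 := mul_le_mul (by linarith : a * a + h * h ≤ 2 * (h * h))
      (by linarith : b * b + h * h ≤ 2 * (h * h)) (by nlinarith [sq_nonneg b]) (by nlinarith)
    nlinarith
  have hD2 : Du * Dv ≤ 2 * h ^ 2 := by nlinarith [mul_pos hDu0 hDv0]
  have h5 : (Du * Dv - (a * b + h * h)) * (Du * Dv + (a * b + h * h)) = h ^ 2 * (a - b) ^ 2 := by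
    linear_combination Dv ^ 2 * hDu2 + (a * a + h * h) * hDv2
  have hDI : a * b + h * h ≤ Du * Dv := by
    nlinarith [h5, sq_nonneg (h * (a - b)), mul_pos hDu0 hDv0]
  have h6 : h ^ 2 ≤ h ^ 2 * (a - b) ^ 2 := by nlinarith
  have hprod : h ^ 2 ≤ (Du * Dv - (a * b + h * h)) * (Du * Dv + (a * b + h * h)) := by
    rw [h5]; exact h6
  have hgap : 1 / 4 ≤ Du * Dv - (a * b + h * h) := by
    by_contra hcon
    push_neg at hcon
    have hsum : Du * Dv + (a * b + h * h) ≤ 4 * h ^ 2 := by linarith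
    have hsum0 : 0 < Du * Dv + (a * b + h * h) := by
      have := mul_pos hDu0 hDv0; linarith
    nlinarith [mul_lt_mul_of_pos_right hcon hsum0]
  have hcos : (a * b + h * h) / (Du * Dv) ≤ Real.cos (1 / (2 * h)) := by
    have h2 : 1 - (1 / (2 * h)) ^ 2 / 2 ≤ Real.cos (1 / (2 * h)) := Real.one_sub_sq_div_two_le_cos
    have h3 : (a * b + h * h) / (Du * Dv) ≤ 1 - 1 / (8 * h ^ 2) := by
      rw [div_le_iff₀ (by positivity)]
      have h7 : Du * Dv / (8 * h ^ 2) ≤ 1 / 4 := by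
        rw [div_le_iff₀ (by positivity)]; nlinarith
      have e8 : (1 - 1 / (8 * h ^ 2)) * (Du * Dv) = Du * Dv - Du * Dv / (8 * h ^ 2) := by ring
      linarith
    have h4 : 1 - 1 / (8 * h ^ 2) ≤ 1 - (1 / (2 * h)) ^ 2 / 2 := by
      have e : (1 / (2 * h)) ^ 2 / 2 = 1 / (8 * h ^ 2) := by field_simp; ring
      rw [e]
    linarith
  have hθ : Real.arccos (Real.cos (1 / (2 * h))) = 1 / (2 * h) := by
    apply Real.arccos_cos (by positivity)
    have h8 : 1 / (2 * h) ≤ 1 / 2 := by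
      rw [div_le_div_iff₀ (by positivity) (by norm_num)]; linarith
    linarith [Real.pi_gt_three]
  calc 1 / (2 * h) = Real.arccos (Real.cos (1 / (2 * h))) := hθ.symm
    _ ≤ _ := arccos_anti' hcos

private lemma key_upper (h : ℝ) (hh : 2 ≤ h) :
    Real.arccos ((0 * 1 + h * h) /
      (Real.sqrt (0 * 0 + h * h) * Real.sqrt (1 * 1 + h * h))) ≤ 2 / h := by
  have h0 : (0:ℝ) < h := by linarith
  have hh2 : (4:ℝ) ≤ h ^ 2 := by nlinarith
  set s := Real.sqrt (1 * 1 + h * h) with hs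
  have hs2 : s ^ 2 = 1 + h * h := by rw [hs]; rw [Real.sq_sqrt] <;> nlinarith
  have hs0 : 0 < s := Real.sqrt_pos.mpr (by nlinarith)
  have hsqh : Real.sqrt (0 * 0 + h * h) = h := by
    rw [show (0:ℝ) * 0 + h * h = h ^ 2 by ring, Real.sqrt_sq h0.le]
  rw [hsqh]
  have hcb : |Real.cos (2 / h) - (1 - (2 / h) ^ 2 / 2)| ≤ |2 / h| ^ 4 * (5 / 96) := by
    apply Real.cos_bound
    rw [abs_of_pos (by positivity), div_le_one h0]; linarith
  have habs : |(2:ℝ) / h| = 2 / h := abs_of_pos (by positivity)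
  rw [habs] at hcb
  have hc2 : Real.cos (2 / h) ≤ 1 - 1 / h ^ 2 := by
    have l := (abs_le.mp hcb).2
    have e1 : (2 / h) ^ 4 * (5 / 96) = (5 / 6) / h ^ 4 := by ring
    have e2 : (2 / h) ^ 2 / 2 = 2 / h ^ 2 := by ring
    rw [e1, e2] at l
    have h3 : (5:ℝ) / 6 / h ^ 4 ≤ 1 / h ^ 2 := by
      rw [div_le_div_iff₀ (by positivity) (by positivity)]; nlinarith
    have h4 : (2:ℝ) / h ^ 2 = 2 * (1 / h ^ 2) := by ring
    rw [h4] at l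
    linarith
  have ht : 1 - 1 / (2 * h ^ 2) ≤ (0 * 1 + h * h) / (h * s) := by
    rw [le_div_iff₀ (by positivity)]
    have hsle : s * (1 - 1 / (2 * h ^ 2)) ≤ h := by
      have e : (1 + h * h) * (1 - 1 / (2 * h ^ 2)) ^ 2
          = h ^ 2 - 3 / (4 * h ^ 2) + 1 / (4 * h ^ 4) := by
        field_simp; ring
      have key : (s * (1 - 1 / (2 * h ^ 2))) ^ 2 ≤ h ^ 2 := by
        rw [mul_pow, hs2, e]
        have h9 : 1 / (4 * h ^ 4) ≤ 3 / (4 * h ^ 2) := by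
          rw [div_le_div_iff₀ (by positivity) (by positivity)]; nlinarith
        linarith
      have hpos : 0 ≤ s * (1 - 1 / (2 * h ^ 2)) := by
        have h10 : 1 / (2 * h ^ 2) ≤ 1 / 2 := by
          rw [div_le_div_iff₀ (by positivity) (by norm_num)]; nlinarith
        nlinarith
      nlinarith
    nlinarith
  have hcle : Real.cos (2 / h) ≤ (0 * 1 + h * h) / (h * s) := by
    have h11 : 1 / (2 * h ^ 2) ≤ 1 / h ^ 2 := by
      rw [div_le_div_iff₀ (by positivity) (by positivity)]; nlinarith
    linarith
  have hθ : Real.arccos (Real.cos (2 / h)) = 2 / h := by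
    apply Real.arccos_cos (by positivity)
    have h12 : 2 / h ≤ 1 := by rw [div_le_one h0]; linarith
    linarith [Real.pi_gt_three]
  calc Real.arccos _ ≤ Real.arccos (Real.cos (2 / h)) := arccos_anti' hcle
    _ = 2 / h := hθ

private def ev (a b : ℝ) : EuclideanSpace ℝ (Fin 2) :=
  (EuclideanSpace.equiv (Fin 2) ℝ).symm ![a, b]

private lemma ev_sub (a b c d : ℝ) : ev a b - ev c d = ev (a - c) (b - d) := by
  ext i; fin_cases i <;> simp [ev]

private lemma ev_neg (a b : ℝ) : -ev a b = ev (-a) (-b) := by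
  ext i; fin_cases i <;> simp [ev]

private lemma inner_ev (a b c d : ℝ) : inner (𝕜 := ℝ) (ev a b) (ev c d) = a * c + b * d := by
  simp [ev, PiLp.inner_apply, Fin.sum_univ_two]; ring

private lemma norm_ev (a b : ℝ) : ‖ev a b‖ = Real.sqrt (a * a + b * b) := by
  rw [EuclideanSpace.norm_eq]
  simp [ev, Fin.sum_univ_two]
  ring_nf

private lemma angle_ev (a b a' b' : ℝ) : InnerProductGeometry.angle (ev a b) (ev a' b') =
    Real.arccos ((a * a' + b * b') /
      (Real.sqrt (a * a + b * b) * Real.sqrt (a' * a' + b' * b'))) := by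
  rw [InnerProductGeometry.angle, inner_ev, norm_ev, norm_ev]

private lemma angle_le_half_pi (a b h : ℝ) (ha : |a| ≤ h) (hb : |b| ≤ h) :
    InnerProductGeometry.angle (ev a h) (ev b h) ≤ π / 2 := by
  rw [angle_ev, Real.arccos_le_pi_div_two]
  have ha' := abs_le.mp ha
  have hb' := abs_le.mp hb
  have h1 : 0 ≤ a * b + h * h := by nlinarith
  have h2 : 0 ≤ Real.sqrt (a * a + h * h) * Real.sqrt (b * b + h * h) := by positivity
  exact div_nonneg h1 h2

private lemma angle_ge_lemma (a b h : ℝ) (hh : 1 ≤ h) (ha : |a| ≤ h) (hb : |b| ≤ h)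
    (hab : 1 ≤ |a - b|) :
    1 / (2 * h) ≤ InnerProductGeometry.angle (ev a h) (ev b h) := by
  rw [angle_ev]; exact key_lower a b h hh ha hb hab

private lemma abs_cast_sub_ge_one {p q : ℕ} (hpq : p ≠ q) : 1 ≤ |(p : ℝ) - q| := by
  have h1 : (p : ℤ) ≠ q := by exact_mod_cast hpq
  have h2 := Int.one_le_abs (sub_ne_zero.mpr h1)
  rw [show (p : ℝ) - q = (((p : ℤ) - q : ℤ) : ℝ) by push_cast; ring, ← Int.cast_abs]
  exact_mod_cast h2

end GridDrawingAux

/-- The 2-layered grid drawing of `K_{m,n}` obtained by scaling the construction so that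
`a₁ = 1` and snapping vertices to grid points: there are absolute constants `C, c > 0` such
that for all `m, n ≥ 2` the complete bipartite graph `K_{m,n}` admits a 2-layered drawing with
all vertices on grid points of a grid of width and height `O(max{m,n})` (hence area
`O(max{m², n²})`), whose total resolution (every angle between two edges sharing an endpoint
and every angle at a crossing of two independent edges) is at least `c / max{m,n}`, and which
moreover has some vertex angle at most `C / max{m,n}` (so the total resolution is
`Θ(1/max{m,n})`). -/
theorem grid_drawing_complete_bipartite :
    ∃ C c : ℝ, 0 < C ∧ 0 < c ∧ ∀ m n : ℕ, 2 ≤ m → 2 ≤ n →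
      ∃ (U : Fin m → ℤ × ℤ) (V : Fin n → ℤ × ℤ) (h : ℕ)
        (P : Fin m → EuclideanSpace ℝ (Fin 2)) (Q : Fin n → EuclideanSpace ℝ (Fin 2)),
        Function.Injective U ∧ Function.Injective V ∧
        -- the two layers: part `U` on the grid line `y = 0`, part `V` on `y = h`
        (∀ i, (U i).2 = 0) ∧ (∀ j, (V j).2 = (h : ℤ)) ∧
        (∀ i, P i = (EuclideanSpace.equiv (Fin 2) ℝ).symm
          ![((U i).1 : ℝ), ((U i).2 : ℝ)]) ∧
        (∀ j, Q j = (EuclideanSpace.equiv (Fin 2) ℝ).symm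
          ![((V j).1 : ℝ), ((V j).2 : ℝ)]) ∧
        -- width and height are `O(max{m,n})`, hence area `O(max{m²,n²})`
        (∀ i, 0 ≤ (U i).1 ∧ ((U i).1 : ℝ) ≤ C * (max m n : ℕ)) ∧
        (∀ j, 0 ≤ (V j).1 ∧ ((V j).1 : ℝ) ≤ C * (max m n : ℕ)) ∧
        ((h : ℝ) ≤ C * (max m n : ℕ)) ∧
        -- angular resolution at least `c / max{m,n}`
        (∀ i : Fin m, ∀ j j' : Fin n, j ≠ j' →
          c / (max m n : ℕ) ≤ ∠ (Q j) (P i) (Q j')) ∧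
        (∀ j : Fin n, ∀ i i' : Fin m, i ≠ i' →
          c / (max m n : ℕ) ≤ ∠ (P i) (Q j) (P i')) ∧
        -- crossing resolution at least `c / max{m,n}`
        (∀ (i i' : Fin m) (j j' : Fin n) (x : EuclideanSpace ℝ (Fin 2)), i ≠ i' → j ≠ j' →
          x ∈ openSegment ℝ (P i) (Q j) → x ∈ openSegment ℝ (P i') (Q j') →
          c / (max m n : ℕ) ≤ ∠ (Q j) x (Q j') ∧ c / (max m n : ℕ) ≤ ∠ (Q j) x (P i')) ∧
        -- and the total resolution is `O(1/max{m,n})` as well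
        (∃ (i : Fin m) (j j' : Fin n), j ≠ j' ∧
          ∠ (Q j) (P i) (Q j') ≤ C / (max m n : ℕ)) := by
  refine ⟨2, 1/2, by norm_num, by norm_num, ?_⟩
  intro m n hm hn
  set N : ℕ := max m n with hNdef
  have hN2 : 2 ≤ N := le_trans hm (le_max_left m n)
  have hNR : (2:ℝ) ≤ (N:ℝ) := by exact_mod_cast hN2
  have hN1 : (1:ℝ) ≤ (N:ℝ) := by linarith
  have hN0 : (0:ℝ) < (N:ℝ) := by linarith
  have hmN : (m:ℝ) ≤ (N:ℝ) := by exact_mod_cast le_max_left m n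
  have hnN : (n:ℝ) ≤ (N:ℝ) := by exact_mod_cast le_max_right m n
  have habs1 : ∀ (i : Fin m) (j : Fin n), |(j:ℝ) - (i:ℝ)| ≤ (N:ℝ) := by
    intro i j
    have h1 : (i:ℝ) < m := by exact_mod_cast i.isLt
    have h2 : (j:ℝ) < n := by exact_mod_cast j.isLt
    have h3 : (0:ℝ) ≤ (i:ℝ) := by positivity
    have h4 : (0:ℝ) ≤ (j:ℝ) := by positivity
    rw [abs_le]; constructor <;> linarith
  have hlow : ∀ a b : ℝ, |a| ≤ (N:ℝ) → |b| ≤ (N:ℝ) → 1 ≤ |a - b| →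
      (1/2 : ℝ) / (N:ℝ) ≤ InnerProductGeometry.angle (ev a (N:ℝ)) (ev b (N:ℝ)) := by
    intro a b ha hb hab
    have h5 := angle_ge_lemma a b (N:ℝ) hN1 ha hb hab
    calc (1/2 : ℝ) / (N:ℝ) = 1 / (2 * (N:ℝ)) := by ring
      _ ≤ _ := h5
  refine ⟨fun i => ((i : ℤ), 0), fun j => ((j : ℤ), (N : ℤ)), N,
    fun i => ev (i : ℝ) 0, fun j => ev (j : ℝ) (N : ℝ),
    ?_, ?_, ?_, ?_, ?_, ?_, ?_, ?_, ?_, ?_, ?_, ?_, ?_⟩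
  · intro i i' hii'
    have := congrArg Prod.fst hii'
    simp only at this
    exact Fin.ext (by exact_mod_cast this)
  · intro j j' hjj'
    have := congrArg Prod.fst hjj'
    simp only at this
    exact Fin.ext (by exact_mod_cast this)
  · intro i; rfl
  · intro j; rfl
  · intro i; simp [ev]
  · intro j; simp [ev]
  · intro i
    refine ⟨by positivity, ?_⟩
    have h1 : (i:ℝ) < m := by exact_mod_cast i.isLt
    push_cast
    linarith
  · intro j
    refine ⟨by positivity, ?_⟩
    have h1 : (j:ℝ) < n := by exact_mod_cast j.isLt
    push_cast
    linarith
  · linarith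
  · -- vertex angles at the bottom layer
    intro i j j' hjj'
    rw [EuclideanGeometry.angle, vsub_eq_sub, vsub_eq_sub, ev_sub, ev_sub, sub_zero]
    refine hlow _ _ (habs1 i j) (habs1 i j') ?_
    rw [show ((j:ℝ) - (i:ℝ)) - ((j':ℝ) - (i:ℝ)) = (j:ℝ) - (j':ℝ) by ring]
    exact abs_cast_sub_ge_one (fun hq => hjj' (Fin.ext hq))
  · -- vertex angles at the top layer
    intro j i i' hii'
    rw [EuclideanGeometry.angle, vsub_eq_sub, vsub_eq_sub, ev_sub, ev_sub,
      ← InnerProductGeometry.angle_neg_neg, ev_neg, ev_neg]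
    simp only [neg_sub, sub_zero]
    refine hlow _ _ (habs1 i j) (habs1 i' j) ?_
    rw [show ((j:ℝ) - (i:ℝ)) - ((j:ℝ) - (i':ℝ)) = (i':ℝ) - (i:ℝ) by ring]
    exact abs_cast_sub_ge_one (fun hq => hii' (Fin.ext hq.symm))
  · -- crossing angles
    intro i i' j j' x hii' hjj' hx1 hx2
    obtain ⟨s, t, hs, ht, hst, hx⟩ := hx1
    obtain ⟨s', t', hs', ht', hst', hx'⟩ := hx2
    subst hx
    have hseq : s = 1 - t := by linarith
    have hs'eq : s' = 1 - t' := by linarith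
    -- the two edges are not parallel
    have hpar : (j:ℤ) - (i:ℤ) ≠ (j':ℤ) - (i':ℤ) := by
      intro hpar
      have hparR : (j:ℝ) - (i:ℝ) = (j':ℝ) - (i':ℝ) := by exact_mod_cast hpar
      have hco1 := congrArg (fun v : EuclideanSpace ℝ (Fin 2) => v 1) hx'
      have hco0 := congrArg (fun v : EuclideanSpace ℝ (Fin 2) => v 0) hx'
      simp [ev] at hco1 hco0
      have htt : t' = t := by
        rcases hco1 with h | h
        · exact h
        · rw [h] at hN0; norm_num at hN0
      rw [hseq, hs'eq, htt] at hco0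
      have hiR : (i:ℝ) = (i':ℝ) := by linear_combination -hco0 - t * hparR
      exact hii' (Fin.ext (by exact_mod_cast hiR))
    have hab : 1 ≤ |((j:ℝ) - (i:ℝ)) - ((j':ℝ) - (i':ℝ))| := by
      have h1 := Int.one_le_abs (sub_ne_zero.mpr hpar)
      rw [show ((j:ℝ) - (i:ℝ)) - ((j':ℝ) - (i':ℝ))
          = ((((j:ℤ) - (i:ℤ)) - ((j':ℤ) - (i':ℤ)) : ℤ) : ℝ) by push_cast; ring, ← Int.cast_abs]
      exact_mod_cast h1
    have e1 : ev (j:ℝ) (N:ℝ) - (s • ev (i:ℝ) 0 + t • ev (j:ℝ) (N:ℝ))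
        = s • (ev (j:ℝ) (N:ℝ) - ev (i:ℝ) 0) := by rw [hseq]; module
    have e2 : ev (j':ℝ) (N:ℝ) - (s • ev (i:ℝ) 0 + t • ev (j:ℝ) (N:ℝ))
        = s' • (ev (j':ℝ) (N:ℝ) - ev (i':ℝ) 0) := by rw [← hx', hs'eq]; module
    have e3 : ev (i':ℝ) 0 - (s • ev (i:ℝ) 0 + t • ev (j:ℝ) (N:ℝ))
        = t' • (ev (i':ℝ) 0 - ev (j':ℝ) (N:ℝ)) := by rw [← hx', hs'eq]; module
    constructor
    · rw [EuclideanGeometry.angle, vsub_eq_sub, vsub_eq_sub, e1, e2,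
        InnerProductGeometry.angle_smul_left_of_pos _ _ hs,
        InnerProductGeometry.angle_smul_right_of_pos _ _ hs',
        ev_sub, ev_sub, sub_zero]
      exact hlow _ _ (habs1 i j) (habs1 i' j') hab
    · rw [EuclideanGeometry.angle, vsub_eq_sub, vsub_eq_sub, e1, e3,
        InnerProductGeometry.angle_smul_left_of_pos _ _ hs,
        InnerProductGeometry.angle_smul_right_of_pos _ _ ht',
        ev_sub, ev_sub, sub_zero,
        show ev ((i':ℝ) - (j':ℝ)) (0 - (N:ℝ)) = -ev ((j':ℝ) - (i':ℝ)) (N:ℝ) by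
          rw [ev_neg, neg_sub]; ring_nf,
        InnerProductGeometry.angle_neg_right]
      have hhalf := angle_le_half_pi ((j:ℝ) - (i:ℝ)) ((j':ℝ) - (i':ℝ)) (N:ℝ)
        (habs1 i j) (habs1 i' j')
      have hπ := Real.pi_gt_three
      have h14 : (1/2 : ℝ) / (N:ℝ) ≤ 1/4 := by
        rw [div_le_div_iff₀ hN0 (by norm_num)]; linarith
      linarith
  · -- a small vertex angle
    have h0n : (0 : ℕ) < n := by omega
    have h1n : (1 : ℕ) < n := by omega
    refine ⟨⟨0, by omega⟩, ⟨0, h0n⟩, ⟨1, h1n⟩, ?_, ?_⟩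
    · intro hq
      have := congrArg Fin.val hq
      simp at this
    · rw [EuclideanGeometry.angle, vsub_eq_sub, vsub_eq_sub, ev_sub, ev_sub]
      simp only [Fin.val_mk, Nat.cast_zero, Nat.cast_one, sub_zero, zero_sub]
      rw [angle_ev]
      exact key_upper (N:ℝ) hNR
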